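/- Let X be a compact metric space, S a nonempty index set, and for each s ∈ S let h_s, g_s : X → ℝ be continuous. For a Borel probability measure μ on X define J(μ) := sup{ (∫ h_s dμ)² / ∫ g_s² dμ : s ∈ S with ∫ g_s² dμ ≠ 0 }, with J(μ) := 0 if no s is admissible (values in [0,∞]). Then: (1) J is lower semicontinuous with respect to weak convergence of probability measures on X, i.e. μ_n → μ weakly implies liminf_n J(μ_n) ≥ J(μ); (2) if in addition for every Borel probability measure μ on X and every s ∈ S the equality ∫ g_s² dμ = 0 implies ∫ h_s dμ = 0, then J is convex: J((1−t)μ₀ + tμ₁) ≤ (1−t)J(μ₀) + tJ(μ₁) for all Borel probability measures μ₀, μ₁ on X and all t ∈ [0,1]. -/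

import Mathlib

open MeasureTheory Filter Topology
open scoped ENNReal NNReal

noncomputable section

lemma key_ineq (A0 A1 B0 B1 t : ℝ) (hB0 : 0 < B0) (hB1 : 0 < B1)
    (ht0 : 0 ≤ t) (ht1 : t ≤ 1) :
    ((1-t)*A0 + t*A1)^2 / ((1-t)*B0 + t*B1) ≤ (1-t)*(A0^2/B0) + t*(A1^2/B1) := by
  have h1t : 0 ≤ 1 - t := by linarith
  have hden : 0 < (1-t)*B0 + t*B1 := by
    rcases eq_or_lt_of_le ht0 with h | h
    · nlinarith
    · positivity
  rw [div_le_iff₀ hden]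
  have e0 : (1-t)*(A0^2/B0) = (1-t)*A0^2/B0 := by ring
  have e1 : t*(A1^2/B1) = t*A1^2/B1 := by ring
  rw [e0, e1, div_add_div _ _ hB0.ne' hB1.ne', div_mul_eq_mul_div, le_div_iff₀ (by positivity)]
  nlinarith [mul_nonneg (mul_nonneg ht0 h1t) (sq_nonneg (A0*B1 - A1*B0))]

/-- Abstract lower semicontinuity and convexity of the supremal Fisher-information-type
functional `J(μ) = sup_s (∫ h_s dμ)² / ∫ g_s² dμ` on a compact metric space:
(1) `J` is lower semicontinuous along weakly convergent sequences of probability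
measures; (2) if `∫ g_s² dμ = 0` forces `∫ h_s dμ = 0` for all probability measures,
then `J` is convex. -/
theorem fisher_type_functional_lsc_convex
    (X : Type*) [MetricSpace X] [CompactSpace X] [MeasurableSpace X] [BorelSpace X]
    (S : Type*) [Nonempty S] (h g : S → X → ℝ)
    (hcont : ∀ s, Continuous (h s)) (gcont : ∀ s, Continuous (g s))
    (J : Measure X → ℝ≥0∞)
    (hJ : ∀ μ : Measure X, J μ =
      sSup {r : ℝ≥0∞ | ∃ s : S, (∫ x, (g s x) ^ 2 ∂μ) ≠ 0 ∧
        r = ENNReal.ofReal ((∫ x, h s x ∂μ) ^ 2 / ∫ x, (g s x) ^ 2 ∂μ)}) :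
    (∀ (μs : ℕ → ProbabilityMeasure X) (μ : ProbabilityMeasure X),
      Tendsto μs atTop (𝓝 μ) →
      J (μ : Measure X) ≤ Filter.atTop.liminf fun n => J (μs n : Measure X)) ∧
    ((∀ μ : Measure X, IsProbabilityMeasure μ →
        ∀ s : S, (∫ x, (g s x) ^ 2 ∂μ) = 0 → (∫ x, h s x ∂μ) = 0) →
      ∀ μ₀ μ₁ : Measure X, IsProbabilityMeasure μ₀ → IsProbabilityMeasure μ₁ →
        ∀ t : ℝ≥0, t ≤ 1 →
        J ((1 - t) • μ₀ + t • μ₁) ≤ (1 - (t : ℝ≥0∞)) * J μ₀ + (t : ℝ≥0∞) * J μ₁) := by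
  constructor
  · -- lower semicontinuity
    intro μs μ hconv
    rw [hJ]
    refine sSup_le ?_
    rintro r ⟨s, hB, rfl⟩
    set A := ∫ x, h s x ∂(μ : Measure X) with hA
    set B := ∫ x, (g s x) ^ 2 ∂(μ : Measure X) with hBdef
    have hBpos : 0 < B :=
      lt_of_le_of_ne (integral_nonneg fun x => sq_nonneg _) (Ne.symm hB)
    have hh : Tendsto (fun n => ∫ x, h s x ∂(μs n : Measure X)) atTop (𝓝 A) :=
      ProbabilityMeasure.tendsto_iff_forall_integral_tendsto.mp hconv
        (BoundedContinuousFunction.mkOfCompact ⟨h s, hcont s⟩)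
    have hg : Tendsto (fun n => ∫ x, (g s x) ^ 2 ∂(μs n : Measure X)) atTop (𝓝 B) := by
      have := ProbabilityMeasure.tendsto_iff_forall_integral_tendsto.mp hconv
        (BoundedContinuousFunction.mkOfCompact ⟨fun x => (g s x) ^ 2, (gcont s).pow 2⟩)
      exact this
    have hlim : Tendsto (fun n => ENNReal.ofReal
        ((∫ x, h s x ∂(μs n : Measure X)) ^ 2 / ∫ x, (g s x) ^ 2 ∂(μs n : Measure X)))
        atTop (𝓝 (ENNReal.ofReal (A ^ 2 / B))) :=
      (ENNReal.continuous_ofReal.tendsto _).comp ((hh.pow 2).div hg hB)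
    have hev : ∀ᶠ n in atTop, ENNReal.ofReal
        ((∫ x, h s x ∂(μs n : Measure X)) ^ 2 / ∫ x, (g s x) ^ 2 ∂(μs n : Measure X))
          ≤ J (μs n : Measure X) := by
      filter_upwards [hg.eventually (eventually_gt_nhds hBpos)] with n hn
      rw [hJ]
      exact le_sSup ⟨s, hn.ne', rfl⟩
    calc ENNReal.ofReal (A ^ 2 / B)
        = atTop.liminf (fun n => ENNReal.ofReal
            ((∫ x, h s x ∂(μs n : Measure X)) ^ 2 / ∫ x, (g s x) ^ 2 ∂(μs n : Measure X))) :=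
          hlim.liminf_eq.symm
      _ ≤ atTop.liminf fun n => J (μs n : Measure X) := liminf_le_liminf hev
  · -- convexity
    intro hwd μ₀ μ₁ hμ₀ hμ₁ t ht
    have ht0 : (0:ℝ) ≤ (t:ℝ) := t.coe_nonneg
    have ht1 : (t:ℝ) ≤ 1 := ht
    set μt : Measure X := (1 - t) • μ₀ + t • μ₁ with hμt
    have split : ∀ f : X → ℝ, Continuous f →
        ∫ x, f x ∂μt = (1 - (t:ℝ)) * ∫ x, f x ∂μ₀ + (t:ℝ) * ∫ x, f x ∂μ₁ := by
      intro f hf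
      have fb := BoundedContinuousFunction.mkOfCompact (⟨f, hf⟩ : C(X, ℝ))
      have hi0 : Integrable f ((1 - t) • μ₀ : Measure X) :=
        (BoundedContinuousFunction.mkOfCompact (⟨f, hf⟩ : C(X, ℝ))).integrable _
      have hi1 : Integrable f (t • μ₁ : Measure X) :=
        (BoundedContinuousFunction.mkOfCompact (⟨f, hf⟩ : C(X, ℝ))).integrable _
      rw [hμt, integral_add_measure hi0 hi1, integral_smul_nnreal_measure,
        integral_smul_nnreal_measure]
      simp [NNReal.smul_def, NNReal.coe_sub ht]
    rw [hJ]
    refine sSup_le ?_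
    rintro r ⟨s, hBt, rfl⟩
    set A0 := ∫ x, h s x ∂μ₀ with hA0
    set A1 := ∫ x, h s x ∂μ₁ with hA1
    set B0 := ∫ x, (g s x) ^ 2 ∂μ₀ with hB0
    set B1 := ∫ x, (g s x) ^ 2 ∂μ₁ with hB1
    have hB0nn : 0 ≤ B0 := integral_nonneg fun x => sq_nonneg _
    have hB1nn : 0 ≤ B1 := integral_nonneg fun x => sq_nonneg _
    have hAs : ∫ x, h s x ∂μt = (1 - (t:ℝ)) * A0 + (t:ℝ) * A1 := split _ (hcont s)
    have hBs : ∫ x, (g s x) ^ 2 ∂μt = (1 - (t:ℝ)) * B0 + (t:ℝ) * B1 :=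
      split _ ((gcont s).pow 2)
    rw [hAs, hBs]
    rw [hBs] at hBt
    have hcoe1t : ENNReal.ofReal (1 - (t:ℝ)) = 1 - (t : ℝ≥0∞) := by
      rw [ENNReal.ofReal_sub _ ht0]
      simp [ENNReal.ofReal_coe_nnreal]
    have hcoet : ENNReal.ofReal ((t:ℝ)) = (t : ℝ≥0∞) := ENNReal.ofReal_coe_nnreal
    rcases eq_or_lt_of_le hB0nn with hB0z | hB0pos
    · -- B0 = 0
      have hA0z : A0 = 0 := hwd μ₀ hμ₀ s hB0z.symm
      have htpos : (0:ℝ) < (t:ℝ) := by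
        rcases eq_or_lt_of_le ht0 with hh' | hh'
        · exfalso; apply hBt; rw [← hB0z, ← hh']; ring
        · exact hh'
      have hB1pos : (0:ℝ) < B1 := by
        rcases eq_or_lt_of_le hB1nn with hh' | hh'
        · exfalso; apply hBt; rw [← hB0z, ← hh']; ring
        · exact hh'
      have : ((1 - (t:ℝ)) * A0 + (t:ℝ) * A1) ^ 2 / ((1 - (t:ℝ)) * B0 + (t:ℝ) * B1)
          = (t:ℝ) * (A1 ^ 2 / B1) := by
        rw [hA0z, ← hB0z]
        field_simp
        ring
      rw [this, ENNReal.ofReal_mul ht0, hcoet]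
      have h1 : ENNReal.ofReal (A1 ^ 2 / B1) ≤ J μ₁ := by
        rw [hJ]; exact le_sSup ⟨s, hB1pos.ne', rfl⟩
      calc (t : ℝ≥0∞) * ENNReal.ofReal (A1 ^ 2 / B1) ≤ (t : ℝ≥0∞) * J μ₁ :=
            mul_le_mul_right h1 _
        _ ≤ (1 - (t : ℝ≥0∞)) * J μ₀ + (t : ℝ≥0∞) * J μ₁ := le_add_self
    · rcases eq_or_lt_of_le hB1nn with hB1z | hB1pos
      · -- B1 = 0
        have hA1z : A1 = 0 := hwd μ₁ hμ₁ s hB1z.symm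
        have ht1pos : (0:ℝ) < 1 - (t:ℝ) := by
          rcases eq_or_lt_of_le ht1 with hh' | hh'
          · exfalso; apply hBt; rw [← hB1z, hh']; ring
          · linarith
        have : ((1 - (t:ℝ)) * A0 + (t:ℝ) * A1) ^ 2 / ((1 - (t:ℝ)) * B0 + (t:ℝ) * B1)
            = (1 - (t:ℝ)) * (A0 ^ 2 / B0) := by
          rw [hA1z, ← hB1z]
          field_simp
          ring
        rw [this, ENNReal.ofReal_mul ht1pos.le, hcoe1t]
        have h0 : ENNReal.ofReal (A0 ^ 2 / B0) ≤ J μ₀ := by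
          rw [hJ]; exact le_sSup ⟨s, hB0pos.ne', rfl⟩
        calc (1 - (t : ℝ≥0∞)) * ENNReal.ofReal (A0 ^ 2 / B0) ≤ (1 - (t : ℝ≥0∞)) * J μ₀ :=
              mul_le_mul_right h0 _
          _ ≤ (1 - (t : ℝ≥0∞)) * J μ₀ + (t : ℝ≥0∞) * J μ₁ := le_self_add
      · -- both positive
        have key := key_ineq A0 A1 B0 B1 (t:ℝ) hB0pos hB1pos ht0 ht1
        have h0 : ENNReal.ofReal (A0 ^ 2 / B0) ≤ J μ₀ := by
          rw [hJ]; exact le_sSup ⟨s, hB0pos.ne', rfl⟩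
        have h1 : ENNReal.ofReal (A1 ^ 2 / B1) ≤ J μ₁ := by
          rw [hJ]; exact le_sSup ⟨s, hB1pos.ne', rfl⟩
        calc ENNReal.ofReal (((1 - (t:ℝ)) * A0 + (t:ℝ) * A1) ^ 2
              / ((1 - (t:ℝ)) * B0 + (t:ℝ) * B1))
            ≤ ENNReal.ofReal ((1 - (t:ℝ)) * (A0 ^ 2 / B0) + (t:ℝ) * (A1 ^ 2 / B1)) :=
              ENNReal.ofReal_le_ofReal key
          _ = ENNReal.ofReal ((1 - (t:ℝ)) * (A0 ^ 2 / B0))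
              + ENNReal.ofReal ((t:ℝ) * (A1 ^ 2 / B1)) := by
              rw [ENNReal.ofReal_add (mul_nonneg (by linarith) (by positivity)) (mul_nonneg ht0 (by positivity))]
          _ = (1 - (t : ℝ≥0∞)) * ENNReal.ofReal (A0 ^ 2 / B0)
              + (t : ℝ≥0∞) * ENNReal.ofReal (A1 ^ 2 / B1) := by
              rw [ENNReal.ofReal_mul (by linarith), ENNReal.ofReal_mul ht0, hcoe1t, hcoet]
          _ ≤ (1 - (t : ℝ≥0∞)) * J μ₀ + (t : ℝ≥0∞) * J μ₁ :=
              add_le_add (mul_le_mul_right h0 _) (mul_le_mul_right h1 _)
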